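/- Let p be a probability density which is positive and locally absolutely continuous on (a,b) with a > −∞, and let F be the associated distribution function. Then lim_{x↓a} F(x)/p(x) = 0 holds in each of the following cases: (a) p is bounded away from zero in some neighbourhood of a; (b) lim_{x↓a} p(x) = 0 and there is δ > 0 such that p is increasing on (a, a+δ); (c) lim_{x↓a} p(x) = 0 and there is δ > 0 such that p is convex on (a, a+δ); (d) lim_{x↓a} p(x) = 0 and there is δ > 0 such that p is concave on (a, a+δ); (e) p is analytic at a; (f) the limit lim_{x↓a} F(x)/p(x) exists. -/

import Mathlib

open MeasureTheory Set Filter Topology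

noncomputable section

/-- The open interval `(a,b)` with extended-real endpoints, viewed as a set of reals. -/
def ooE (a b : EReal) : Set ℝ := {x : ℝ | a < (x : EReal) ∧ (x : EReal) < b}

/-- The closed interval `[a,b] ∩ ℝ` (the closure of `(a,b)` in `ℝ`). -/
def ccE (a b : EReal) : Set ℝ := {x : ℝ | a ≤ (x : EReal) ∧ (x : EReal) ≤ b}

/-- The filter on `ℝ` of right-neighbourhoods of the (possibly infinite) endpoint `a`:
for finite `a` this is `𝓝[>] a`, for `a = ⊥` it is `atBot`. -/
def nhdsGT (a : EReal) : Filter ℝ :=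
  Filter.comap (fun x : ℝ => (x : EReal)) (nhdsWithin a (Set.Ioi a))

/-- The filter on `ℝ` of left-neighbourhoods of the (possibly infinite) endpoint `b`. -/
def nhdsLT (b : EReal) : Filter ℝ :=
  Filter.comap (fun x : ℝ => (x : EReal)) (nhdsWithin b (Set.Iio b))

/-- `f` is (locally) an indefinite integral of `f'` on `s`. -/
def IsLocACOn (f f' : ℝ → ℝ) (s : Set ℝ) : Prop :=
  ∀ x ∈ s, ∀ y ∈ s, IntervalIntegrable f' volume x y ∧ f y - f x = ∫ t in x..y, f' t

/-- `f` is locally absolutely continuous on `s`. -/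
def LocACOn (f : ℝ → ℝ) (s : Set ℝ) : Prop := ∃ f', IsLocACOn f f' s

/-- Condition 1: `p` is a probability density which is positive and locally absolutely
continuous on `(a,b)` and vanishes outside of `(a,b)`. -/
structure Cond1 (a b : EReal) (p : ℝ → ℝ) : Prop where
  lt : a < b
  meas : Measurable p
  nonneg : ∀ x, 0 ≤ p x
  pos : ∀ x ∈ ooE a b, 0 < p x
  zero : ∀ x, x ∉ ooE a b → p x = 0
  integrable : MeasureTheory.Integrable p
  total : ∫ x, p x = 1
  locAC : LocACOn p (ooE a b)

/-- Condition 2: `γ` is Borel measurable, not identically zero, decreasing on `[a,b]`,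
with `E|γ(Z)| < ∞` and `E[γ(Z)] = 0`. -/
structure Cond2 (a b : EReal) (p γ : ℝ → ℝ) : Prop where
  meas : Measurable γ
  ne_zero : ∃ x ∈ ccE a b, γ x ≠ 0
  anti : AntitoneOn γ (ccE a b)
  integrable : MeasureTheory.Integrable (fun x => γ x * p x)
  mean_zero : ∫ x, γ x * p x = 0

/-- `I(x) = ∫_a^x γ(t) p(t) dt` (the density vanishes outside `(a,b)`). -/
def Ifun (γ p : ℝ → ℝ) (x : ℝ) : ℝ := ∫ t in Iic x, γ t * p t

/-- The distribution function `F` of the density `p`. -/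
def Ffun (p : ℝ → ℝ) (x : ℝ) : ℝ := ∫ t in Iic x, p t

/-- `η = I/p`. -/
def etaFun (γ p : ℝ → ℝ) (x : ℝ) : ℝ := Ifun γ p x / p x

/-- `x₀ = sup {x ∈ (a,b) : γ(x) > 0}`. -/
def xZero (a b : EReal) (γ : ℝ → ℝ) : ℝ := sSup {x | x ∈ ooE a b ∧ 0 < γ x}

/-- `E[h(Z)]` for `Z` with density `p`. -/
def meanOf (p h : ℝ → ℝ) : ℝ := ∫ x, h x * p x

/-- The standard solution `g_h` of the Stein equation `η g' + γ g = h - E[h(Z)]`. -/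
def gsol (γ p h : ℝ → ℝ) (x : ℝ) : ℝ :=
  (∫ t in Iic x, (h t - meanOf p h) * p t) / (p x * etaFun γ p x)

/-- The derivative of the standard solution, defined everywhere via the Stein equation. -/
def gsol' (γ p h : ℝ → ℝ) (x : ℝ) : ℝ :=
  (h x - meanOf p h - γ x * gsol γ p h x) / etaFun γ p x

section MillsHelpers

variable {a : ℝ} {b : EReal} {p : ℝ → ℝ}

lemma Cond1.zero_of_le (h1 : Cond1 (a : EReal) b p) {t : ℝ} (ht : t ≤ a) : p t = 0 := by
  apply h1.zero
  intro h
  exact absurd (EReal.coe_lt_coe_iff.mp h.1) (not_lt.mpr ht)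

lemma Cond1.Ffun_left (h1 : Cond1 (a : EReal) b p) : Ffun p a = 0 := by
  have h : EqOn p (fun _ => (0:ℝ)) (Iic a) := fun t ht => h1.zero_of_le ht
  rw [Ffun, setIntegral_congr_fun measurableSet_Iic h]
  simp

lemma Cond1.Ffun_split (h1 : Cond1 (a : EReal) b p) {x y : ℝ} (hxy : x ≤ y) :
    Ffun p y - Ffun p x = ∫ t in Ioc x y, p t := by
  rw [Ffun, Ffun, intervalIntegral.integral_Iic_sub_Iic h1.integrable.integrableOn
    h1.integrable.integrableOn, intervalIntegral.integral_of_le hxy]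

lemma Cond1.Ffun_eq (h1 : Cond1 (a : EReal) b p) {x : ℝ} (hx : a ≤ x) :
    Ffun p x = ∫ t in Ioc a x, p t := by
  have := h1.Ffun_split hx
  rw [h1.Ffun_left] at this
  linarith

lemma Cond1.Ffun_nonneg (h1 : Cond1 (a : EReal) b p) (x : ℝ) : 0 ≤ Ffun p x :=
  setIntegral_nonneg measurableSet_Iic fun t _ => h1.nonneg t

lemma Cond1.Ffun_mono (h1 : Cond1 (a : EReal) b p) : Monotone (Ffun p) := by
  intro x y hxy
  have h := h1.Ffun_split hxy
  have h2 : 0 ≤ ∫ t in Ioc x y, p t :=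
    setIntegral_nonneg measurableSet_Ioc fun t _ => h1.nonneg t
  linarith

lemma Cond1.Ffun_tendsto (h1 : Cond1 (a : EReal) b p) :
    Tendsto (Ffun p) (𝓝[>] a) (𝓝 0) := by
  have hcont : Continuous fun x => ∫ t in a..x, p t :=
    intervalIntegral.continuous_primitive (fun _ _ => h1.integrable.intervalIntegrable) a
  have heq : Ffun p = fun x => ∫ t in a..x, p t := by
    funext x
    have := intervalIntegral.integral_Iic_sub_Iic (μ := volume) (f := p) (a := a) (b := x)
      h1.integrable.integrableOn h1.integrable.integrableOn
    rw [← this]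
    rw [show (∫ t in Iic a, p t) = Ffun p a from rfl, h1.Ffun_left, Ffun]
    ring
  rw [heq]
  have : Tendsto (fun x => ∫ t in a..x, p t) (𝓝 a) (𝓝 (∫ t in a..a, p t)) :=
    hcont.tendsto a
  simpa using this.mono_left nhdsWithin_le_nhds

lemma Cond1.exists_upper (h1 : Cond1 (a : EReal) b p) :
    ∃ c : ℝ, a < c ∧ (c : EReal) < b := by
  obtain ⟨y, hy1, hy2⟩ := EReal.exists_between_coe_real h1.lt
  exact ⟨y, by exact_mod_cast hy1, hy2⟩

/-- Case (a): `p` bounded below near `a`. -/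
lemma Cond1.mills_of_bddBelow (h1 : Cond1 (a : EReal) b p) {ε m : ℝ} (hε : 0 < ε)
    (hm : 0 < m) (hbd : ∀ x ∈ Ioo a (a + ε), m ≤ p x) :
    Tendsto (fun x => Ffun p x / p x) (𝓝[>] a) (𝓝 0) := by
  have hmem : Ioo a (a + ε) ∈ 𝓝[>] a :=
    Ioo_mem_nhdsGT_of_mem ⟨le_refl a, by linarith⟩
  apply squeeze_zero' (g := fun x => Ffun p x / m)
  · filter_upwards [hmem] with x hx
    exact div_nonneg (h1.Ffun_nonneg x) (le_trans hm.le (hbd x hx))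
  · filter_upwards [hmem] with x hx
    exact div_le_div_of_nonneg_left (h1.Ffun_nonneg x) hm (hbd x hx)
  · have := h1.Ffun_tendsto.div_const m
    simpa using this

/-- Case (b): `p` monotone on a right neighbourhood of `a`. -/
lemma Cond1.mills_of_monotoneOn (h1 : Cond1 (a : EReal) b p) {δ : ℝ} (hδ : 0 < δ)
    (hmono : MonotoneOn p (Ioo a (a + δ))) :
    Tendsto (fun x => Ffun p x / p x) (𝓝[>] a) (𝓝 0) := by
  obtain ⟨c₀, hc₀a, hc₀b⟩ := h1.exists_upper
  set c := min (a + δ) c₀ with hc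
  have hac : a < c := lt_min (by linarith) hc₀a
  have hmem : Ioo a c ∈ 𝓝[>] a := Ioo_mem_nhdsGT_of_mem ⟨le_refl a, hac⟩
  have hpos : ∀ x ∈ Ioo a c, 0 < p x := by
    intro x hx
    apply h1.pos
    constructor
    · exact_mod_cast hx.1
    · calc (x : EReal) < (c₀ : EReal) := by
            exact_mod_cast lt_of_lt_of_le hx.2 (min_le_right _ _)
        _ < b := hc₀b
  apply squeeze_zero' (g := fun x => x - a)
  · filter_upwards [hmem] with x hx
    exact div_nonneg (h1.Ffun_nonneg x) (hpos x hx).le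
  · filter_upwards [hmem] with x hx
    have hpx := hpos x hx
    rw [div_le_iff₀ hpx]
    have hxδ : x < a + δ := lt_of_lt_of_le hx.2 (min_le_left _ _)
    have hbound : Ffun p x ≤ ∫ _ in Ioc a x, p x := by
      rw [h1.Ffun_eq hx.1.le]
      apply setIntegral_mono_on h1.integrable.integrableOn
        (integrableOn_const measure_Ioc_lt_top.ne) measurableSet_Ioc
      intro t ht
      exact hmono ⟨ht.1, lt_of_le_of_lt ht.2 hxδ⟩ ⟨hx.1, hxδ⟩ ht.2
    have hconst : (∫ _ in Ioc a x, p x) = (x - a) * p x := by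
      rw [setIntegral_const, Real.volume_real_Ioc_of_le (by linarith [hx.1] : a ≤ x), smul_eq_mul]
    linarith
  · have : Tendsto (fun x : ℝ => x - a) (𝓝 a) (𝓝 (a - a)) :=
      (continuous_id.sub continuous_const).tendsto a
    simpa using this.mono_left nhdsWithin_le_nhds

/-- Case (c): convexity plus vanishing limit implies monotonicity near `a`. -/
lemma Cond1.monotoneOn_of_convexOn (h1 : Cond1 (a : EReal) b p) {δ : ℝ}
    (hten : Tendsto p (𝓝[>] a) (𝓝 0)) (hcvx : ConvexOn ℝ (Ioo a (a + δ)) p) :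
    MonotoneOn p (Ioo a (a + δ)) := by
  intro x hx y hy hxy
  rcases eq_or_lt_of_le hxy with rfl | hxy
  · exact le_rfl
  have hya : (0:ℝ) < y - a := by linarith [hy.1]
  have key : p x ≤ (x - a) / (y - a) * p y := by
    have hlim : Tendsto (fun t => (y - x) / (y - t) * p t + (x - t) / (y - t) * p y)
        (𝓝[>] a) (𝓝 ((y - x) / (y - a) * 0 + (x - a) / (y - a) * p y)) := by
      apply Tendsto.add
      · apply Tendsto.mul _ hten
        apply Tendsto.div tendsto_const_nhds _ (by linarith : y - a ≠ 0)
        exact ((continuous_const.sub continuous_id).tendsto a).mono_left nhdsWithin_le_nhds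
      · have : ContinuousAt (fun t : ℝ => (x - t) / (y - t) * p y) a := by
          apply ContinuousAt.mul _ continuousAt_const
          exact ContinuousAt.div (continuousAt_const.sub continuousAt_id)
            (continuousAt_const.sub continuousAt_id) (sub_ne_zero.mpr (by linarith : y ≠ a))
        exact this.tendsto.mono_left nhdsWithin_le_nhds
    have hev : ∀ᶠ t in 𝓝[>] a, p x ≤ (y - x) / (y - t) * p t + (x - t) / (y - t) * p y := by
      filter_upwards [Ioo_mem_nhdsGT_of_mem ⟨le_refl a, hx.1⟩] with t ht
      have hty : t < y := ht.2.trans hxy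
      have hyt : (0:ℝ) < y - t := by linarith
      have hcomb := hcvx.2 (show t ∈ Ioo a (a + δ) from ⟨ht.1, ht.2.trans hx.2⟩) hy
        (div_nonneg (by linarith : (0:ℝ) ≤ y - x) hyt.le)
        (div_nonneg (by linarith [ht.2] : (0:ℝ) ≤ x - t) hyt.le)
        (by field_simp; ring)
      simp only [smul_eq_mul] at hcomb
      have hpt : (y - x) / (y - t) * t + (x - t) / (y - t) * y = x := by
        field_simp
        ring
      rw [hpt] at hcomb
      exact hcomb
    have := ge_of_tendsto hlim hev
    simpa using this
  calc p x ≤ (x - a) / (y - a) * p y := key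
    _ ≤ 1 * p y := by
        apply mul_le_mul_of_nonneg_right _ (h1.nonneg y)
        rw [div_le_one hya]
        linarith
    _ = p y := one_mul _

/-- Case (d): `p` concave on a right neighbourhood of `a`. -/
lemma Cond1.mills_of_concaveOn (h1 : Cond1 (a : EReal) b p) {δ : ℝ} (hδ : 0 < δ)
    (hccv : ConcaveOn ℝ (Ioo a (a + δ)) p) :
    Tendsto (fun x => Ffun p x / p x) (𝓝[>] a) (𝓝 0) := by
  obtain ⟨c₀, hc₀a, hc₀b⟩ := h1.exists_upper
  set c := min (a + δ / 2) c₀ with hcdef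
  have hac : a < c := lt_min (by linarith) hc₀a
  have hcδ : c < a + δ := lt_of_le_of_lt (min_le_left _ _) (by linarith)
  have hcb : (c : EReal) < b :=
    lt_of_le_of_lt (by exact_mod_cast min_le_right (a + δ / 2) c₀) hc₀b
  have hcI : c ∈ Ioo a (a + δ) := ⟨hac, hcδ⟩
  have hmem : Ioo a c ∈ 𝓝[>] a := Ioo_mem_nhdsGT_of_mem ⟨le_refl a, hac⟩
  have hpos : ∀ x ∈ Ioo a c, 0 < p x := by
    intro x hx
    apply h1.pos
    exact ⟨by exact_mod_cast hx.1, lt_trans (by exact_mod_cast hx.2) hcb⟩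
  apply squeeze_zero' (g := fun x => (x - a) * ((c - a) / (c - x)))
  · filter_upwards [hmem] with x hx
    exact div_nonneg (h1.Ffun_nonneg x) (hpos x hx).le
  · filter_upwards [hmem] with x hx
    have hpx := hpos x hx
    have hcx : (0:ℝ) < c - x := by linarith [hx.2]
    have hca : (0:ℝ) < c - a := by linarith
    rw [div_le_iff₀ hpx]
    have hptle : ∀ t ∈ Ioc a x, p t ≤ (c - a) / (c - x) * p x := by
      intro t ht
      rcases eq_or_lt_of_le ht.2 with rfl | htx
      · have h1le : (1:ℝ) ≤ (c - a) / (c - t) := by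
          rw [le_div_iff₀ (by linarith [ht.1] : (0:ℝ) < c - t)]
          linarith [ht.1]
        calc p t = 1 * p t := (one_mul _).symm
          _ ≤ (c - a) / (c - t) * p t := mul_le_mul_of_nonneg_right h1le (h1.nonneg t)
      · have hct : (0:ℝ) < c - t := by linarith
        have htI : t ∈ Ioo a (a + δ) := ⟨ht.1, by linarith [hx.2, hcδ]⟩
        have hcomb := hccv.2 htI hcI
          (div_nonneg (by linarith : (0:ℝ) ≤ c - x) hct.le)
          (div_nonneg (by linarith : (0:ℝ) ≤ x - t) hct.le)
          (by field_simp; ring)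
        simp only [smul_eq_mul] at hcomb
        have hpt : (c - x) / (c - t) * t + (x - t) / (c - t) * c = x := by
          field_simp
          ring
        rw [hpt] at hcomb
        have hpc : 0 ≤ (x - t) / (c - t) * p c :=
          mul_nonneg (div_nonneg (by linarith) hct.le) (h1.nonneg c)
        have hstep : (c - x) / (c - t) * p t ≤ p x := by linarith
        rw [div_mul_eq_mul_div, div_le_iff₀ hct] at hstep
        rw [div_mul_eq_mul_div, le_div_iff₀ hcx]
        nlinarith [h1.nonneg t, ht.1]
    have hbound : Ffun p x ≤ ∫ _ in Ioc a x, (c - a) / (c - x) * p x := by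
      rw [h1.Ffun_eq hx.1.le]
      apply setIntegral_mono_on h1.integrable.integrableOn
        (integrableOn_const measure_Ioc_lt_top.ne) measurableSet_Ioc hptle
    have hconst : (∫ _ in Ioc a x, (c - a) / (c - x) * p x)
        = (x - a) * ((c - a) / (c - x) * p x) := by
      rw [setIntegral_const, Real.volume_real_Ioc_of_le (by linarith [hx.1] : a ≤ x), smul_eq_mul]
    calc Ffun p x ≤ (x - a) * ((c - a) / (c - x) * p x) := by rw [← hconst]; exact hbound
      _ = (x - a) * ((c - a) / (c - x)) * p x := by ring
  · have hca : c - a ≠ 0 := sub_ne_zero.mpr (ne_of_gt hac)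
    have : ContinuousAt (fun x : ℝ => (x - a) * ((c - a) / (c - x))) a := by
      apply ContinuousAt.mul (continuousAt_id.sub continuousAt_const)
      exact ContinuousAt.div continuousAt_const
        (continuousAt_const.sub continuousAt_id) hca
    have := this.tendsto.mono_left (nhdsWithin_le_nhds (s := Ioi a))
    simpa using this

lemma analyticAt_deriv {f : ℝ → ℝ} {x : ℝ} (h : AnalyticAt ℝ f x) :
    AnalyticAt ℝ (deriv f) x := by
  obtain ⟨s, hs, hA⟩ := h.exists_mem_nhds_analyticOnNhd
  exact hA.deriv x (mem_of_mem_nhds hs)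

/-- Case (e): `p` analytic at `a`. -/
lemma Cond1.mills_of_analyticAt (h1 : Cond1 (a : EReal) b p) (ha : AnalyticAt ℝ p a) :
    Tendsto (fun x => Ffun p x / p x) (𝓝[>] a) (𝓝 0) := by
  obtain ⟨c₀, hc₀a, hc₀b⟩ := h1.exists_upper
  rcases (analyticAt_deriv ha).eventually_eq_zero_or_eventually_ne_zero with hz | hnz
  · -- deriv p eventually zero near a: p locally constant, bounded below on the right
    have hev : ∀ᶠ z in 𝓝 a, deriv p z = 0 ∧ AnalyticAt ℝ p z :=
      hz.and ha.eventually_analyticAt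
    obtain ⟨ε, hε, hball⟩ := Metric.eventually_nhds_iff_ball.mp hev
    set r := min ε (c₀ - a) with hrdef
    have hr : 0 < r := lt_min hε (by linarith)
    set z₁ := a + r / 2 with hz₁
    have hz₁c₀ : z₁ < c₀ := by
      have : r ≤ c₀ - a := min_le_right _ _
      simp only [hz₁]; linarith
    have haz₁ : a < z₁ := by rw [hz₁]; linarith
    have hz₁pos : 0 < p z₁ := h1.pos z₁ ⟨by exact_mod_cast haz₁,
      lt_trans (by exact_mod_cast hz₁c₀) hc₀b⟩
    have hsub : Ioo (a - r) (a + r) ⊆ Metric.ball a ε := by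
      intro z hz
      rw [Metric.mem_ball, Real.dist_eq, abs_lt]
      constructor
      · linarith [hz.1, min_le_left ε (c₀ - a)]
      · linarith [hz.2, min_le_left ε (c₀ - a)]
    have hcont : ContinuousOn p (Ioo (a - r) (a + r)) := fun z hz =>
      ((hball z (hsub hz)).2.continuousAt).continuousWithinAt
    have hdiff : DifferentiableOn ℝ p (interior (Ioo (a - r) (a + r))) := by
      rw [interior_Ioo]
      exact fun z hz => ((hball z (hsub hz)).2.differentiableAt).differentiableWithinAt
    have hd0 : ∀ z ∈ interior (Ioo (a - r) (a + r)), deriv p z = 0 := by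
      rw [interior_Ioo]
      exact fun z hz => (hball z (hsub hz)).1
    have hanti : AntitoneOn p (Ioo (a - r) (a + r)) :=
      antitoneOn_of_deriv_nonpos (convex_Ioo _ _) hcont hdiff (fun z hz => (hd0 z hz).le)
    apply h1.mills_of_bddBelow (ε := r / 2) (by linarith) hz₁pos
    intro x hx
    have hxI : x ∈ Ioo (a - r) (a + r) := ⟨by linarith [hx.1], by linarith [hx.2]⟩
    have hz₁I : z₁ ∈ Ioo (a - r) (a + r) := ⟨by simp only [hz₁]; linarith,
      by simp only [hz₁]; linarith⟩
    have hxz₁ : x ≤ z₁ := by simpa [hz₁] using hx.2.le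
    exact hanti hxI hz₁I hxz₁
  · -- deriv p nonzero on a punctured neighbourhood
    have hev : ∀ᶠ z in 𝓝[≠] a, deriv p z ≠ 0 ∧ AnalyticAt ℝ p z :=
      hnz.and (ha.eventually_analyticAt.filter_mono nhdsWithin_le_nhds)
    obtain ⟨ε, hε, hball⟩ := Metric.nhdsWithin_basis_ball.eventually_iff.mp hev
    have hprop : ∀ z ∈ Ioo a (a + ε), deriv p z ≠ 0 ∧ AnalyticAt ℝ p z := by
      intro z hz
      apply hball
      constructor
      · rw [Metric.mem_ball, Real.dist_eq, abs_lt]; constructor <;> [linarith [hz.1]; linarith [hz.2]]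
      · exact ne_of_gt hz.1
    set J := Ioo a (a + ε) with hJdef
    have hJconn : ∀ u ∈ J, ∀ v ∈ J, Icc u v ⊆ J := by
      intro u hu v hv z hz
      exact ⟨lt_of_lt_of_le hu.1 hz.1, lt_of_le_of_lt hz.2 hv.2⟩
    have hcontd : ∀ z ∈ J, ContinuousAt (deriv p) z := fun z hz =>
      (analyticAt_deriv (hprop z hz).2).continuousAt
    have hcontJ : ContinuousOn p J := fun z hz =>
      ((hprop z hz).2.continuousAt).continuousWithinAt
    have hkey2 : ∀ u ∈ J, ∀ v ∈ J, 0 < deriv p u → deriv p v < 0 → False := by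
      intro u hu v hv h0u h0v
      rcases le_total u v with h | h
      · obtain ⟨z, hz, hz0⟩ := intermediate_value_Icc' h
          (fun z hz => (hcontd z (hJconn u hu v hv hz)).continuousWithinAt)
          (show (0:ℝ) ∈ Icc (deriv p v) (deriv p u) from ⟨h0v.le, h0u.le⟩)
        exact (hprop z (hJconn u hu v hv hz)).1 hz0
      · obtain ⟨z, hz, hz0⟩ := intermediate_value_Icc h
          (fun z hz => (hcontd z (hJconn v hv u hu hz)).continuousWithinAt)
          (show (0:ℝ) ∈ Icc (deriv p v) (deriv p u) from ⟨h0v.le, h0u.le⟩)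
        exact (hprop z (hJconn v hv u hu hz)).1 hz0
    have hz₀ : a + ε / 2 ∈ J := ⟨by linarith, by linarith⟩
    rcases (hprop _ hz₀).1.lt_or_gt with hneg | hpos
    · -- deriv p < 0 on J : p antitone, bounded below
      have hallneg : ∀ z ∈ J, deriv p z < 0 := by
        intro z hz
        rcases (hprop z hz).1.lt_or_gt with h | h
        · exact h
        · exact absurd (hkey2 z hz _ hz₀ h hneg) not_false
      have hanti : StrictAntiOn p J := by
        apply strictAntiOn_of_deriv_neg (convex_Ioo _ _) hcontJ
        rw [interior_Ioo]
        exact hallneg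
      set r := min ε (c₀ - a) with hrdef
      have hr : 0 < r := lt_min hε (by linarith)
      set z₁ := a + r / 2 with hz₁def
      have hz₁J : z₁ ∈ J := ⟨by simp only [hz₁def]; linarith,
        by simp only [hz₁def]; linarith [min_le_left ε (c₀ - a)]⟩
      have hz₁c₀ : z₁ < c₀ := by
        simp only [hz₁def]; linarith [min_le_right ε (c₀ - a)]
      have haz₁ : a < z₁ := by rw [hz₁def]; linarith
      have hz₁pos : 0 < p z₁ := h1.pos z₁ ⟨by exact_mod_cast haz₁,
        lt_trans (by exact_mod_cast hz₁c₀) hc₀b⟩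
      apply h1.mills_of_bddBelow (ε := r / 2) (by linarith) hz₁pos
      intro x hx
      have hxJ : x ∈ J := ⟨hx.1, by
        have : r ≤ ε := min_le_left _ _
        have := hx.2; simp only [hz₁def] at *; linarith⟩
      rcases eq_or_lt_of_le (show x ≤ z₁ by simpa [hz₁def] using hx.2.le) with rfl | hlt
      · exact le_rfl
      · exact (hanti hxJ hz₁J hlt).le
    · -- deriv p > 0 on J : p monotone
      have hallpos : ∀ z ∈ J, 0 < deriv p z := by
        intro z hz
        rcases (hprop z hz).1.lt_or_gt with h | h
        · exact absurd (hkey2 _ hz₀ z hz hpos h) not_false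
        · exact h
      have hmono : StrictMonoOn p J := by
        apply strictMonoOn_of_deriv_pos (convex_Ioo _ _) hcontJ
        rw [interior_Ioo]
        exact hallpos
      exact h1.mills_of_monotoneOn hε hmono.monotoneOn

/-- Case (f): the limit exists. -/
lemma Cond1.mills_of_exists_limit (h1 : Cond1 (a : EReal) b p) {L : ℝ}
    (hL : Tendsto (fun x => Ffun p x / p x) (𝓝[>] a) (𝓝 L)) :
    Tendsto (fun x => Ffun p x / p x) (𝓝[>] a) (𝓝 0) := by
  rcases eq_or_ne L 0 with rfl | hL0
  · exact hL
  exfalso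
  obtain ⟨c₀, hc₀a, hc₀b⟩ := h1.exists_upper
  have hpos : ∀ x ∈ Ioo a c₀, 0 < p x := by
    intro x hx
    exact h1.pos x ⟨by exact_mod_cast hx.1, lt_trans (by exact_mod_cast hx.2) hc₀b⟩
  have hmemc₀ : Ioo a c₀ ∈ 𝓝[>] a := Ioo_mem_nhdsGT_of_mem ⟨le_refl a, hc₀a⟩
  have hLnonneg : 0 ≤ L := by
    apply ge_of_tendsto hL
    filter_upwards [hmemc₀] with x hx
    exact div_nonneg (h1.Ffun_nonneg x) (hpos x hx).le
  have hLpos : 0 < L := lt_of_le_of_ne hLnonneg (Ne.symm hL0)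
  have hev : ∀ᶠ x in 𝓝[>] a, x ∈ Ioo a c₀ ∧ L / 2 * p x ≤ Ffun p x := by
    have h2 : ∀ᶠ x in 𝓝[>] a, L / 2 < Ffun p x / p x :=
      hL.eventually (eventually_gt_nhds (half_lt_self hLpos))
    filter_upwards [hmemc₀, h2] with x hx h2x
    refine ⟨hx, ?_⟩
    have := (lt_div_iff₀ (hpos x hx)).mp h2x
    linarith
  obtain ⟨u, hu, hsub⟩ := mem_nhdsGT_iff_exists_Ioo_subset.mp hev
  set x₀ := (a + u) / 2 with hx₀def
  have hu' : a < u := hu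
  have hx₀ : x₀ ∈ Ioo a u := ⟨by simp only [hx₀def]; linarith, by simp only [hx₀def]; linarith⟩
  have hF₀ : 0 < Ffun p x₀ := by
    rw [h1.Ffun_eq hx₀.1.le]
    rw [setIntegral_pos_iff_support_of_nonneg_ae
      (Filter.Eventually.of_forall fun t => h1.nonneg t) h1.integrable.integrableOn]
    apply lt_of_lt_of_le _ (measure_mono (show Ioo a x₀ ⊆ Function.support p ∩ Ioc a x₀ by
      intro t ht
      refine ⟨?_, ht.1, ht.2.le⟩
      have htu : t ∈ Ioo a u := ⟨ht.1, lt_trans ht.2 hx₀.2⟩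
      exact (hpos t (hsub htu).1).ne'))
    rw [Real.volume_Ioo]
    simp only [ENNReal.ofReal_pos]
    linarith [hx₀.1]
  set s := L / 4 with hsdef
  have hs : 0 < s := by simp only [hsdef]; linarith
  have key : ∀ n : ℕ, ∀ x ∈ Ioc a x₀, x₀ - n * s ≤ x →
      Ffun p x₀ * (1 / 2) ^ n ≤ Ffun p x := by
    intro n
    induction n with
    | zero =>
      intro x hx hxn
      simp only [Nat.cast_zero, zero_mul, sub_zero] at hxn
      have : x = x₀ := le_antisymm hx.2 hxn
      subst this
      simp
    | succ n ih =>
      intro x hx hxn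
      rcases le_or_gt (x₀ - n * s) x with h | h
      · calc Ffun p x₀ * (1 / 2) ^ (n + 1) ≤ Ffun p x₀ * (1 / 2) ^ n := by
              apply mul_le_mul_of_nonneg_left _ (h1.Ffun_nonneg x₀)
              exact pow_le_pow_of_le_one (by norm_num) (by norm_num) (Nat.le_succ n)
          _ ≤ Ffun p x := ih x hx h
      · set y := min (x + s) x₀ with hydef
        have hxy : x ≤ y := le_min (by linarith) hx.2
        have hyx₀ : y ≤ x₀ := min_le_right _ _
        have hya : a < y := lt_of_lt_of_le hx.1 hxy
        have hyn : x₀ - n * s ≤ y := by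
          rcases min_cases (x + s) x₀ with ⟨heq, _⟩ | ⟨heq, _⟩
          · rw [hydef, heq]
            push_cast at hxn
            linarith
          · rw [hydef, heq]
            nlinarith [hs.le, (n.cast_nonneg : (0:ℝ) ≤ (n:ℝ))]
        have ihy := ih y ⟨hya, hyx₀⟩ hyn
        have hgap := h1.Ffun_split hxy
        have hFy : 0 ≤ Ffun p y := h1.Ffun_nonneg y
        have hbound : (∫ t in Ioc x y, p t) ≤ (y - x) * (2 / L * Ffun p y) := by
          have hmon : ∀ t ∈ Ioc x y, p t ≤ 2 / L * Ffun p y := by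
            intro t ht
            have htu : t ∈ Ioo a u :=
              ⟨lt_of_lt_of_le hx.1 ht.1.le, lt_of_le_of_lt (le_trans ht.2 hyx₀) hx₀.2⟩
            have h2 := (hsub htu).2
            have hFt : Ffun p t ≤ Ffun p y := h1.Ffun_mono ht.2
            rw [show p t = 2 / L * (L / 2 * p t) by field_simp]
            have h2L : (0:ℝ) ≤ 2 / L := by positivity
            nlinarith
          calc (∫ t in Ioc x y, p t) ≤ ∫ _ in Ioc x y, 2 / L * Ffun p y :=
                setIntegral_mono_on h1.integrable.integrableOn
                  (integrableOn_const measure_Ioc_lt_top.ne) measurableSet_Ioc hmon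
            _ = (y - x) * (2 / L * Ffun p y) := by
                rw [setIntegral_const, Real.volume_real_Ioc_of_le (by linarith : x ≤ y), smul_eq_mul]
        have hyxs : y - x ≤ s := by
          have : y ≤ x + s := min_le_left _ _
          linarith
        have hhalf : (y - x) * (2 / L * Ffun p y) ≤ 1 / 2 * Ffun p y := by
          have h2L : (0:ℝ) ≤ 2 / L * Ffun p y := by positivity
          calc (y - x) * (2 / L * Ffun p y) ≤ s * (2 / L * Ffun p y) :=
                mul_le_mul_of_nonneg_right hyxs h2L
            _ = 1 / 2 * Ffun p y := by
                simp only [hsdef]; field_simp; ring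
        have hstep : 1 / 2 * Ffun p y ≤ Ffun p x := by linarith
        calc Ffun p x₀ * (1 / 2) ^ (n + 1) = 1 / 2 * (Ffun p x₀ * (1 / 2) ^ n) := by ring
          _ ≤ 1 / 2 * Ffun p y := by linarith [ihy]
          _ ≤ Ffun p x := hstep
  obtain ⟨n₀, hn₀⟩ := exists_nat_ge ((x₀ - a) / s)
  have hfinal : ∀ᶠ x in 𝓝[>] a, Ffun p x₀ * (1 / 2) ^ n₀ ≤ Ffun p x := by
    filter_upwards [Ioo_mem_nhdsGT_of_mem ⟨le_refl a, hx₀.1⟩] with x hx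
    apply key n₀ x ⟨hx.1, hx.2.le⟩
    have : x₀ - a ≤ n₀ * s := by
      rw [div_le_iff₀ hs] at hn₀
      linarith
    linarith [hx.1]
  have := ge_of_tendsto h1.Ffun_tendsto hfinal
  have hcontra : 0 < Ffun p x₀ * (1 / 2) ^ n₀ :=
    mul_pos hF₀ (pow_pos (by norm_num) n₀)
  linarith

end MillsHelpers

/-- Mild sufficient conditions on the density `p` near a finite left endpoint `a`
ensuring the Mills ratio limit `lim_{x↓a} F(x)/p(x) = 0`. -/
theorem prop_mills_sufficient (a : ℝ) (b : EReal) (p : ℝ → ℝ)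
    (h1 : Cond1 (a : EReal) b p)
    (hcase :
      (∃ ε > (0:ℝ), ∃ m > (0:ℝ), ∀ x ∈ Ioo a (a + ε), m ≤ p x) ∨
      (Tendsto p (𝓝[>] a) (𝓝 0) ∧ ∃ δ > (0:ℝ), MonotoneOn p (Ioo a (a + δ))) ∨
      (Tendsto p (𝓝[>] a) (𝓝 0) ∧ ∃ δ > (0:ℝ), ConvexOn ℝ (Ioo a (a + δ)) p) ∨
      (Tendsto p (𝓝[>] a) (𝓝 0) ∧ ∃ δ > (0:ℝ), ConcaveOn ℝ (Ioo a (a + δ)) p) ∨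
      AnalyticAt ℝ p a ∨
      (∃ L : ℝ, Tendsto (fun x => Ffun p x / p x) (𝓝[>] a) (𝓝 L))) :
    Tendsto (fun x => Ffun p x / p x) (𝓝[>] a) (𝓝 0) := by
  rcases hcase with ⟨ε, hε, m, hm, hbd⟩ | ⟨_, δ, hδ, hmono⟩ | ⟨hten, δ, hδ, hcvx⟩ |
    ⟨_, δ, hδ, hccv⟩ | hana | ⟨L, hL⟩
  · exact h1.mills_of_bddBelow hε hm hbd
  · exact h1.mills_of_monotoneOn hδ hmono
  · exact h1.mills_of_monotoneOn hδ (h1.monotoneOn_of_convexOn hten hcvx)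
  · exact h1.mills_of_concaveOn hδ hccv
  · exact h1.mills_of_analyticAt hana
  · exact h1.mills_of_exists_limit hL

end
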